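/- Suppose θ is an infinite regular cardinal and (T, <_T) is a tree of height θ with at least κ many θ-branches such that every level T_γ (γ < θ) has size less than μ. Then κ ∈ ad(μ, θ): there exist families 𝒳, 𝒴 with |𝒳| = κ, (𝒴,⊆) of order type θ, such that any two distinct x, x′ ∈ 𝒳 satisfy x ∩ x′ ⊆ y for some y ∈ 𝒴, x \ y ≠ ∅ for every (x,y) ∈ 𝒳 × 𝒴, and {min(x \ y) : x ∈ 𝒳} has size less than μ for every y ∈ 𝒴. -/

import Mathlib

open Cardinal Ordinal Set

theorem stmt_17 (θ μ κ : Cardinal.{0}) (hθ : ℵ₀ ≤ θ) (hθreg : θ.IsRegular)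
    (T : Type) (tlt : T → T → Prop) (lvl : T → Ordinal.{0})
    (hlvl : ∀ t, lvl t < θ.ord)
    (hmono : ∀ s t, tlt s t → lvl s < lvl t)
    (hpred : ∀ s s' t, tlt s t → tlt s' t → (tlt s s' ∨ tlt s' s ∨ s = s'))
    (hheight : ∀ γ < θ.ord, ∃ t, lvl t = γ)
    (hlevel : ∀ γ < θ.ord, Cardinal.mk {t : T // lvl t = γ} < μ)
    (b : Ordinal → Set T)
    (hbchain : ∀ β < κ.ord, ∀ s ∈ b β, ∀ t ∈ b β, tlt s t ∨ tlt t s ∨ s = t)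
    (hbfull : ∀ β < κ.ord, ∀ γ < θ.ord, ∃ t ∈ b β, lvl t = γ)
    (hbinj : ∀ α β : Ordinal, α < β → β < κ.ord → b α ≠ b β) :
    ∃ (𝒳 : Set (Set Ordinal.{0})) (Y : Ordinal.{0} → Set Ordinal.{0}),
      Cardinal.mk ↥𝒳 = Cardinal.lift.{1,0} κ ∧
      (∀ σ τ : Ordinal, σ < τ → τ < θ.ord → Y σ ⊂ Y τ) ∧
      (∀ x ∈ 𝒳, ∀ x' ∈ 𝒳, x ≠ x' → ∃ τ < θ.ord, x ∩ x' ⊆ Y τ) ∧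
      (∀ x ∈ 𝒳, ∀ τ < θ.ord, (x \ Y τ).Nonempty) ∧
      (∀ τ < θ.ord,
        Cardinal.mk ↥{o : Ordinal | ∃ x ∈ 𝒳, o = sInf (x \ Y τ)} <
          Cardinal.lift.{1,0} μ) := by
  classical
  have hlim : Order.IsSuccLimit θ.ord := Cardinal.isSuccLimit_ord hθ
  -- a level-respecting injection of T into the ordinals
  let r := WellOrderingRel (α := T)
  let M := Ordinal.type r
  let f : T → Ordinal := fun t => M * lvl t + Ordinal.typein r t
  have hfe : ∀ t, Ordinal.typein r t < M := fun t => Ordinal.typein_lt_type r t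
  have hfmono : ∀ s t, lvl s < lvl t → f s < f t := by
    intro s t h
    calc M * lvl s + Ordinal.typein r s < M * lvl s + M :=
          (add_lt_add_iff_left _).mpr (hfe s)
      _ = M * (Order.succ (lvl s)) := (Ordinal.mul_succ M (lvl s)).symm
      _ ≤ M * lvl t := mul_le_mul_right (Order.succ_le_of_lt h) M
      _ ≤ f t := le_self_add
  have hfinj : Function.Injective f := by
    intro s t h
    rcases lt_trichotomy (lvl s) (lvl t) with hl | hl | hl
    · exact absurd h (hfmono s t hl).ne
    · have : Ordinal.typein r s = Ordinal.typein r t := by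
        have h' : M * lvl s + Ordinal.typein r s = M * lvl s + Ordinal.typein r t := by
          simpa [f, hl] using h
        exact add_left_cancel h'
      exact Ordinal.typein_injective r this
    · exact absurd h.symm (hfmono t s hl).ne
  -- the families
  set Y : Ordinal → Set Ordinal := fun τ => f '' {t | lvl t < τ} with hYdef
  set 𝒳 : Set (Set Ordinal) := (fun β => f '' b β) '' (Set.Iio κ.ord) with hXdef
  have hYmem : ∀ (s : T) (τ : Ordinal), f s ∈ Y τ ↔ lvl s < τ := by
    intro s τ
    constructor
    · rintro ⟨u, hu, he⟩
      rwa [← hfinj he]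
    · intro h; exact ⟨s, h, rfl⟩
  refine ⟨𝒳, Y, ?_, ?_, ?_, ?_, ?_⟩
  · -- cardinality of 𝒳
    have hinj : Set.InjOn (fun β => f '' b β) (Set.Iio κ.ord) := by
      intro α hα β hβ h
      by_contra hne
      have hb : b α ≠ b β := by
        rcases lt_or_gt_of_ne hne with h' | h'
        · exact hbinj α β h' hβ
        · exact fun he => hbinj β α h' hα he.symm
      exact hb (Set.image_injective.mpr hfinj h)
    rw [hXdef, Cardinal.mk_image_eq_of_injOn _ _ hinj, Ordinal.mk_Iio_ordinal,
      Cardinal.card_ord]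
  · -- Y strictly increasing
    intro σ τ hστ hτ
    constructor
    · rintro o ⟨u, hu, rfl⟩
      exact ⟨u, lt_trans hu hστ, rfl⟩
    · intro hsub
      obtain ⟨t, ht⟩ := hheight σ (lt_trans hστ hτ)
      have h1 : f t ∈ Y τ := (hYmem t τ).mpr (ht ▸ hστ)
      have h2 : f t ∈ Y σ := hsub h1
      have := (hYmem t σ).mp h2
      rw [ht] at this
      exact lt_irrefl σ this
  · -- intersections are small
    rintro x ⟨α, hα, rfl⟩ x' ⟨β, hβ, rfl⟩ hne
    by_contra hcon
    push_neg at hcon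
    -- common elements of bα and bβ exist at arbitrarily high levels
    have hhigh : ∀ τ < θ.ord, ∃ t, t ∈ b α ∧ t ∈ b β ∧ τ ≤ lvl t := by
      intro τ hτ
      obtain ⟨o, ho, hoY⟩ := Set.not_subset.mp (hcon τ hτ)
      obtain ⟨⟨u, hu, rfl⟩, h2⟩ := ho
      obtain ⟨v, hv, hvu⟩ := h2
      have hvb : u ∈ b β := by rwa [hfinj hvu] at hv
      refine ⟨u, hu, hvb, ?_⟩
      by_contra h
      exact hoY ((hYmem u τ).mpr (lt_of_not_ge h))
    -- then the two branches coincide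
    have key : ∀ γ δ : Ordinal, γ < κ.ord → δ < κ.ord →
        (∀ τ < θ.ord, ∃ t, t ∈ b γ ∧ t ∈ b δ ∧ τ ≤ lvl t) → b γ ⊆ b δ := by
      intro γ δ hγ hδ hh s hs
      have hsl : Order.succ (lvl s) < θ.ord := hlim.succ_lt (hlvl s)
      obtain ⟨t, ht1, ht2, ht3⟩ := hh _ hsl
      have hst : lvl s < lvl t := lt_of_lt_of_le (Order.lt_succ _) ht3
      obtain ⟨s', hs', hls'⟩ := hbfull δ hδ (lvl s) (hlvl s)
      have h1 : tlt s t := by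
        rcases hbchain γ hγ s hs t ht1 with h | h | h
        · exact h
        · exact absurd (hmono t s h) (asymm hst)
        · exact absurd (h ▸ hst) (lt_irrefl _)
      have h2 : tlt s' t := by
        have hst' : lvl s' < lvl t := hls' ▸ hst
        rcases hbchain δ hδ s' hs' t ht2 with h | h | h
        · exact h
        · exact absurd (hmono t s' h) (asymm hst')
        · exact absurd (h ▸ hst') (lt_irrefl _)
      rcases hpred s s' t h1 h2 with h | h | h
      · exact absurd (hmono s s' h) (by rw [hls']; exact lt_irrefl _)
      · exact absurd (hmono s' s h) (by rw [hls']; exact lt_irrefl _)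
      · exact h ▸ hs'
    have hsym : ∀ τ < θ.ord, ∃ t, t ∈ b β ∧ t ∈ b α ∧ τ ≤ lvl t := by
      intro τ hτ; obtain ⟨t, h1, h2, h3⟩ := hhigh τ hτ; exact ⟨t, h2, h1, h3⟩
    have : b α = b β :=
      Set.Subset.antisymm (key α β hα hβ hhigh) (key β α hβ hα hsym)
    exact hne (by simp only []; rw [this])
  · -- nonempty differences
    rintro x ⟨β, hβ, rfl⟩ τ hτ
    obtain ⟨t, ht, hlt⟩ := hbfull β hβ τ hτ
    refine ⟨f t, ⟨t, ht, rfl⟩, ?_⟩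
    intro h
    have := (hYmem t τ).mp h
    rw [hlt] at this
    exact lt_irrefl τ this
  · -- the minima form small sets
    intro τ hτ
    have hsub : {o : Ordinal | ∃ x ∈ 𝒳, o = sInf (x \ Y τ)} ⊆ f '' {t | lvl t = τ} := by
      rintro o ⟨x, ⟨β, hβ, rfl⟩, rfl⟩
      obtain ⟨t, ht, hlt⟩ := hbfull β hβ τ hτ
      have htmem : f t ∈ f '' b β \ Y τ := by
        refine ⟨⟨t, ht, rfl⟩, ?_⟩
        intro h
        have := (hYmem t τ).mp h
        rw [hlt] at this
        exact lt_irrefl τ this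
      have hmin : ∀ o' ∈ f '' b β \ Y τ, f t ≤ o' := by
        rintro o' ⟨⟨s, hs, rfl⟩, h2⟩
        have hsge : τ ≤ lvl s := by
          by_contra h
          exact h2 ((hYmem s τ).mpr (lt_of_not_ge h))
        rcases eq_or_lt_of_le hsge with h | h
        · -- same level in the same branch: s = t
          rcases hbchain β hβ s hs t ht with hc | hc | hc
          · exact absurd (hmono s t hc) (by rw [hlt, ← h]; exact lt_irrefl _)
          · exact absurd (hmono t s hc) (by rw [hlt, ← h]; exact lt_irrefl _)
          · exact le_of_eq (hc ▸ rfl)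
        · exact le_of_lt (hfmono t s (by rw [hlt]; exact h))
      have : sInf (f '' b β \ Y τ) = f t :=
        le_antisymm (csInf_le' htmem) (le_csInf ⟨_, htmem⟩ hmin)
      rw [this]
      exact ⟨t, hlt, rfl⟩
    calc Cardinal.mk ↥{o : Ordinal | ∃ x ∈ 𝒳, o = sInf (x \ Y τ)}
        ≤ Cardinal.mk ↥(f '' {t | lvl t = τ}) := Cardinal.mk_le_mk_of_subset hsub
      _ = Cardinal.lift.{1,0} (Cardinal.mk ↥{t | lvl t = τ}) := by
          have := Cardinal.mk_image_eq_lift f {t | lvl t = τ} hfinj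
          simpa using this
      _ < Cardinal.lift.{1,0} μ := Cardinal.lift_lt.mpr (hlevel τ hτ)
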